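/- If A is an SIA (stochastic, indecomposable, aperiodic) row-stochastic matrix, then there exists an integer l ≥ 1 such that A^l is scrambling. -/
import Mathlib


open MeasureTheory Filter

def IsStochastic {n : ℕ} (A : Matrix (Fin n) (Fin n) ℝ) : Prop :=
  (∀ i j, 0 ≤ A i j) ∧ ∀ i, ∑ j, A i j = 1

noncomputable def tau {n : ℕ} (A : Matrix (Fin n) (Fin n) ℝ) : ℝ :=
  1 - ⨅ p : Fin n × Fin n, ∑ s, min (A p.1 s) (A p.2 s)

def Scrambling {n : ℕ} (A : Matrix (Fin n) (Fin n) ℝ) : Prop :=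
  ∀ i j, ∃ s, 0 < A i s ∧ 0 < A j s

noncomputable def spread {n : ℕ} (x : Fin n → ℝ) : ℝ := (⨆ i, x i) - ⨅ i, x i

/-- A row-stochastic matrix is SIA if its powers converge to a matrix with identical rows. -/
def IsSIA {n : ℕ} (A : Matrix (Fin n) (Fin n) ℝ) : Prop :=
  IsStochastic A ∧ ∃ ξ : Fin n → ℝ,
    Tendsto (fun k => A ^ k) atTop (nhds (Matrix.of fun _ j => ξ j))

theorem sia_pow_scrambling {n : ℕ} (hn : 0 < n) (A : Matrix (Fin n) (Fin n) ℝ)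
    (hA : IsSIA A) : ∃ l : ℕ, 1 ≤ l ∧ Scrambling (A ^ l) := by
  obtain ⟨⟨hpos, hsum⟩, ξ, hlim⟩ := hA
  have i0 : Fin n := ⟨0, hn⟩
  -- entrywise convergence
  have hent : ∀ i j, Tendsto (fun k => (A ^ k) i j) atTop (nhds (ξ j)) := by
    intro i j
    have hc : Continuous (fun M : Matrix (Fin n) (Fin n) ℝ => M i j) :=
      (continuous_apply j).comp (continuous_apply i)
    exact (hc.tendsto _).comp hlim
  -- row sums of powers are 1
  have hrow : ∀ k (i : Fin n), ∑ j, (A ^ k) i j = 1 := by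
    intro k
    induction k with
    | zero =>
      intro i
      simp [Matrix.one_apply]
    | succ k ih =>
      intro i
      rw [pow_succ']
      simp only [Matrix.mul_apply]
      rw [Finset.sum_comm]
      have h1 : ∀ m : Fin n, ∑ j, A i m * (A ^ k) m j = A i m := by
        intro m; rw [← Finset.mul_sum, ih m, mul_one]
      simp_rw [h1]
      exact hsum i
  -- sum of ξ is 1
  have hξsum : ∑ j, ξ j = 1 := by
    have h1 : Tendsto (fun k => ∑ j, (A ^ k) i0 j) atTop (nhds (∑ j, ξ j)) :=
      tendsto_finset_sum _ (fun j _ => hent i0 j)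
    have h2 : Tendsto (fun k => ∑ j, (A ^ k) i0 j) atTop (nhds 1) := by
      simp only [hrow]
      exact tendsto_const_nhds
    exact tendsto_nhds_unique h1 h2
  -- some coordinate of ξ is positive
  obtain ⟨s, hs⟩ : ∃ s, 0 < ξ s := by
    by_contra h
    push_neg at h
    have : ∑ j, ξ j ≤ 0 := Finset.sum_nonpos (fun j _ => h j)
    linarith
  -- eventually every entry in column s is positive
  have hev : ∀ᶠ k in atTop, ∀ i : Fin n, 0 < (A ^ k) i s :=
    eventually_all.2 (fun i => (hent i s).eventually (eventually_gt_nhds hs))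
  obtain ⟨l, hl1, hl2⟩ := (eventually_ge_atTop 1 |>.and hev).exists
  exact ⟨l, hl1, fun i j => ⟨s, hl2 i, hl2 j⟩⟩
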